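/- Suppose that every polyhedral relation R ⊆ ℝ^{2n} which admits a cycle admits a cycle of length at most M(n). Then every convex relation T ⊆ ℝ^{2n} which admits a cycle also admits a cycle of length at most M(n). -/

import Mathlib

open Finset

def PolyIn (V : Type*) [AddCommGroup V] [Module ℝ V] (P : Set V) : Prop :=
  ∃ (k : ℕ) (f : Fin k → V →ₗ[ℝ] ℝ) (b : Fin k → ℝ), P = {x | ∀ i, f i x ≤ b i}

lemma polyIn_of_fintype {V : Type*} [AddCommGroup V] [Module ℝ V] {ι : Type*} [Fintype ι]
    (f : ι → V →ₗ[ℝ] ℝ) (b : ι → ℝ) : PolyIn V {x | ∀ i, f i x ≤ b i} := by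
  refine ⟨Fintype.card ι, fun j => f ((Fintype.equivFin ι).symm j),
    fun j => b ((Fintype.equivFin ι).symm j), ?_⟩
  ext x
  constructor
  · intro h j; exact h _
  · intro h i; simpa using h (Fintype.equivFin ι i)

/-- One-variable Fourier–Motzkin elimination, real version. -/
lemma fm_real {k : ℕ} (c b d : Fin k → ℝ) :
    (∃ t : ℝ, ∀ i, d i + c i * t ≤ b i) ↔
      ((∀ i, c i = 0 → d i ≤ b i) ∧
       ∀ i j, 0 < c i → c j < 0 → c j * (b i - d i) ≤ c i * (b j - d j)) := by
  constructor
  · rintro ⟨t, ht⟩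
    constructor
    · intro i hi; have := ht i; rw [hi] at this; linarith
    · intro i j hi hj
      have h1 := ht i; have h2 := ht j
      nlinarith [mul_le_mul_of_nonpos_left (show c i * t ≤ b i - d i by linarith) hj.le,
        mul_le_mul_of_nonneg_left (show c j * t ≤ b j - d j by linarith) hi.le]
  · rintro ⟨h0, hpn⟩
    have key : ∀ (t : ℝ) (i : Fin k), c i = 0 ∨ (0 < c i ∧ t ≤ (b i - d i) / c i) ∨
        (c i < 0 ∧ (b i - d i) / c i ≤ t) → d i + c i * t ≤ b i := by
      rintro t i (h | ⟨h, ht⟩ | ⟨h, ht⟩)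
      · rw [h]; simpa using h0 i h
      · rw [le_div_iff₀ h] at ht; linarith
      · rw [div_le_iff_of_neg h] at ht; linarith
    by_cases hneg : (univ.filter (fun j => c j < 0)).Nonempty
    · refine ⟨(univ.filter (fun j => c j < 0)).sup' hneg (fun j => (b j - d j) / c j), ?_⟩
      intro i
      rcases lt_trichotomy (c i) 0 with hi | hi | hi
      · exact key _ i (Or.inr (Or.inr ⟨hi,
          le_sup' (fun j => (b j - d j) / c j) (by simp [hi])⟩))
      · exact key _ i (Or.inl hi)
      · refine key _ i (Or.inr (Or.inl ⟨hi, ?_⟩))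
        rw [Finset.sup'_le_iff]
        intro j hj
        have hj' : c j < 0 := by simpa using hj
        have := hpn i j hi hj'
        have e1 : (b j - d j) / c j * c j = b j - d j := div_mul_cancel₀ _ hj'.ne
        have e2 : (b i - d i) / c i * c i = b i - d i := div_mul_cancel₀ _ hi.ne'
        nlinarith [mul_pos hi (neg_pos.mpr hj')]
    · by_cases hpos : (univ.filter (fun j => 0 < c j)).Nonempty
      · refine ⟨(univ.filter (fun j => 0 < c j)).inf' hpos (fun j => (b j - d j) / c j), ?_⟩
        intro i
        rcases lt_trichotomy (c i) 0 with hi | hi | hi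
        · exact absurd ⟨i, by simp [hi]⟩ hneg
        · exact key _ i (Or.inl hi)
        · exact key _ i (Or.inr (Or.inl ⟨hi, inf'_le (fun j => (b j - d j) / c j) (by simp [hi])⟩))
      · refine ⟨0, fun i => ?_⟩
        have h1 : ¬ c i < 0 := fun h => hneg ⟨i, by simp [h]⟩
        have h2 : ¬ 0 < c i := fun h => hpos ⟨i, by simp [h]⟩
        exact key _ i (Or.inl (le_antisymm (not_lt.mp h2) (not_lt.mp h1)))

lemma polyIn_preimage {V W : Type*} [AddCommGroup V] [Module ℝ V] [AddCommGroup W] [Module ℝ W]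
    (L : V →ₗ[ℝ] W) {S : Set W} (h : PolyIn W S) : PolyIn V (L ⁻¹' S) := by
  obtain ⟨k, f, b, rfl⟩ := h
  exact ⟨k, fun i => (f i).comp L, b, rfl⟩

lemma polyIn_proj {V : Type*} [AddCommGroup V] [Module ℝ V] {S : Set (ℝ × V)}
    (hS : PolyIn (ℝ × V) S) : PolyIn V {v | ∃ t, (t, v) ∈ S} := by
  obtain ⟨k, f, b, rfl⟩ := hS
  set c : Fin k → ℝ := fun i => f i (1, 0) with hc
  set g : Fin k → V →ₗ[ℝ] ℝ := fun i => (f i).comp (LinearMap.inr ℝ ℝ V) with hg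
  have hfd : ∀ (i : Fin k) (t : ℝ) (v : V), f i (t, v) = g i v + c i * t := by
    intro i t v
    have h1 : (t, v) = t • ((1:ℝ), (0:V)) + ((0:ℝ), v) := by
      simp [Prod.ext_iff]
    rw [h1, map_add, map_smul]
    simp [hc, hg]
    ring
  have hset : {v | ∃ t, (t, v) ∈ {x : ℝ × V | ∀ i, f i x ≤ b i}} =
      {v : V | ∀ x : Fin k ⊕ Fin k × Fin k,
        (Sum.elim (fun i => if c i = 0 then g i else 0)
          (fun p => if 0 < c p.1 ∧ c p.2 < 0 then c p.1 • g p.2 - c p.2 • g p.1 else 0) x) v ≤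
        (Sum.elim (fun i => if c i = 0 then b i else 0)
          (fun p => if 0 < c p.1 ∧ c p.2 < 0 then c p.1 * b p.2 - c p.2 * b p.1 else 0) x)} := by
    ext v
    simp only [Set.mem_setOf_eq]
    have hiff : (∃ t, ∀ i, f i (t, v) ≤ b i) ↔ ∃ t, ∀ i, g i v + c i * t ≤ b i := by
      constructor
      · rintro ⟨t, ht⟩; exact ⟨t, fun i => (hfd i t v) ▸ ht i⟩
      · rintro ⟨t, ht⟩; refine ⟨t, fun i => ?_⟩; rw [hfd]; exact ht i
    rw [hiff, fm_real c b (fun i => g i v)]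
    constructor
    · rintro ⟨h0, hpn⟩ (i | ⟨i, j⟩)
      · by_cases h : c i = 0 <;> simp [h, h0]
      · by_cases h : 0 < c i ∧ c j < 0
        · simp only [Sum.elim_inr, if_pos h]
          have := hpn i j h.1 h.2
          simp only [LinearMap.sub_apply, LinearMap.smul_apply, smul_eq_mul]
          linarith
        · simp [h]
    · intro h
      constructor
      · intro i hi
        have := h (Sum.inl i)
        simpa [hi] using this
      · intro i j hi hj
        have := h (Sum.inr (i, j))
        rw [Sum.elim_inr, Sum.elim_inr, if_pos (show 0 < c i ∧ c j < 0 from ⟨hi, hj⟩),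
          if_pos (show 0 < c i ∧ c j < 0 from ⟨hi, hj⟩)] at this
        simp only [LinearMap.sub_apply, LinearMap.smul_apply, smul_eq_mul] at this
        linarith
  rw [hset]
  exact polyIn_of_fintype _ _

/-- The linear map `(t, (w, v)) ↦ (Fin.cons t w, v)`. -/
def consMap (m : ℕ) (V : Type*) [AddCommGroup V] [Module ℝ V] :
    ℝ × ((Fin m → ℝ) × V) →ₗ[ℝ] (Fin (m + 1) → ℝ) × V where
  toFun x := (Fin.cons x.1 x.2.1, x.2.2)
  map_add' x y := by
    refine Prod.ext ?_ rfl
    funext i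
    refine Fin.cases ?_ (fun i => ?_) i <;> simp
  map_smul' r x := by
    refine Prod.ext ?_ rfl
    funext i
    refine Fin.cases ?_ (fun i => ?_) i <;> simp

lemma polyIn_proj_pi {V : Type*} [AddCommGroup V] [Module ℝ V] :
    ∀ (m : ℕ) (S : Set ((Fin m → ℝ) × V)), PolyIn _ S → PolyIn V {v | ∃ w, (w, v) ∈ S} := by
  intro m
  induction m with
  | zero =>
    intro S hS
    have hEq : {v | ∃ w : Fin 0 → ℝ, (w, v) ∈ S} =
        (LinearMap.prod (0 : V →ₗ[ℝ] (Fin 0 → ℝ)) LinearMap.id) ⁻¹' S := by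
      ext v
      constructor
      · rintro ⟨w, hw⟩
        have hw0 : w = 0 := Subsingleton.elim _ _
        rw [hw0] at hw
        simpa [Set.mem_preimage, LinearMap.prod_apply] using hw
      · intro hv
        exact ⟨0, by simpa [Set.mem_preimage, LinearMap.prod_apply] using hv⟩
    rw [hEq]
    exact polyIn_preimage _ hS
  | succ m ih =>
    intro S hS
    have h1 : PolyIn (ℝ × ((Fin m → ℝ) × V)) ((consMap m V) ⁻¹' S) := polyIn_preimage _ hS
    have h2 : PolyIn ((Fin m → ℝ) × V) {p | ∃ t, (t, p) ∈ (consMap m V) ⁻¹' S} :=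
      polyIn_proj h1
    have h3 := ih _ h2
    have hEq : {v | ∃ w : Fin (m+1) → ℝ, (w, v) ∈ S} =
        {v | ∃ w' : Fin m → ℝ, (w', v) ∈ {p | ∃ t, (t, p) ∈ (consMap m V) ⁻¹' S}} := by
      ext v
      constructor
      · rintro ⟨w, hw⟩
        refine ⟨fun i => w i.succ, w 0, ?_⟩
        simp only [Set.mem_preimage, consMap]
        convert hw using 2
        exact Fin.cons_self_tail w
        rfl
      · rintro ⟨w', t, hw⟩
        exact ⟨Fin.cons t w', hw⟩
    rw [hEq]
    exact h3

section Hull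

variable {n : ℕ}

/-- Coordinate functionals on `(Fin n → ℝ) × (Fin n → ℝ)`. -/
noncomputable def coordFn (n : ℕ) : (Fin n ⊕ Fin n) → ((Fin n → ℝ) × (Fin n → ℝ)) →ₗ[ℝ] ℝ :=
  Sum.elim (fun j => (LinearMap.proj j).comp (LinearMap.fst ℝ _ _))
    (fun j => (LinearMap.proj j).comp (LinearMap.snd ℝ _ _))

lemma coordFn_inj {x y : (Fin n → ℝ) × (Fin n → ℝ)}
    (h : ∀ j, coordFn n j x = coordFn n j y) : x = y := by
  refine Prod.ext (funext fun j => ?_) (funext fun j => ?_)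
  · exact h (Sum.inl j)
  · exact h (Sum.inr j)

noncomputable def wcoord (n m : ℕ) (i : Fin m) :
    ((Fin m → ℝ) × ((Fin n → ℝ) × (Fin n → ℝ))) →ₗ[ℝ] ℝ :=
  (LinearMap.proj i).comp (LinearMap.fst ℝ _ _)

lemma polyIn_convexHull {m : ℕ} (p : Fin m → (Fin n → ℝ) × (Fin n → ℝ)) :
    PolyIn ((Fin n → ℝ) × (Fin n → ℝ)) (convexHull ℝ (Set.range p)) := by
  classical
  set φ := coordFn n with hφ
  -- functionals defining the simplex-and-graph polyhedron
  set F : (Fin m ⊕ Bool ⊕ (Fin n ⊕ Fin n) × Bool) → ((Fin m → ℝ) × ((Fin n → ℝ) × (Fin n → ℝ))) →ₗ[ℝ] ℝ :=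
    Sum.elim (fun i => -(wcoord n m i))
      (Sum.elim (fun s => if s then (∑ i, wcoord n m i) else -(∑ i, wcoord n m i))
        (fun q => if q.2 then (φ q.1).comp (LinearMap.snd ℝ _ _) - ∑ i, (φ q.1 (p i)) • wcoord n m i
          else ∑ i, (φ q.1 (p i)) • wcoord n m i - (φ q.1).comp (LinearMap.snd ℝ _ _))) with hF
  set B : (Fin m ⊕ Bool ⊕ (Fin n ⊕ Fin n) × Bool) → ℝ :=
    Sum.elim (fun _ => 0) (Sum.elim (fun s => if s then 1 else -1) (fun _ => 0)) with hB
  have hS : PolyIn _ {x : (Fin m → ℝ) × ((Fin n → ℝ) × (Fin n → ℝ)) | ∀ q, F q x ≤ B q} :=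
    polyIn_of_fintype F B
  have hproj := polyIn_proj_pi m _ hS
  have hmem : ∀ (w : Fin m → ℝ) (v : (Fin n → ℝ) × (Fin n → ℝ)),
      ((w, v) ∈ {x : (Fin m → ℝ) × ((Fin n → ℝ) × (Fin n → ℝ)) | ∀ q, F q x ≤ B q}) ↔
      ((∀ i, 0 ≤ w i) ∧ ∑ i, w i = 1 ∧ v = ∑ i, w i • p i) := by
    intro w v
    have hwc : ∀ i, wcoord n m i (w, v) = w i := fun i => rfl
    constructor
    · intro h
      have h0 : ∀ i, 0 ≤ w i := fun i => by
        have := h (Sum.inl i); simp [hF, hB, hwc] at this; linarith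
      have hsum : ∑ i, w i = 1 := by
        have h1 := h (Sum.inr (Sum.inl true))
        have h2 := h (Sum.inr (Sum.inl false))
        simp [hF, hB, hwc] at h1 h2
        linarith
      refine ⟨h0, hsum, coordFn_inj fun j => ?_⟩
      have h1 := h (Sum.inr (Sum.inr (j, true)))
      have h2 := h (Sum.inr (Sum.inr (j, false)))
      simp [hF, hB, hwc] at h1 h2
      have hv : φ j v = ∑ x, φ j (p x) * w x := le_antisymm h1 h2
      rw [hv, map_sum]
      exact Finset.sum_congr rfl fun i _ => by simp [smul_eq_mul, mul_comm, hφ]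
    · rintro ⟨h0, hsum, rfl⟩
      rintro (i | s | ⟨j, b⟩)
      · simp [hF, hB, hwc]; linarith [h0 i]
      · rcases s with _ | _ <;> simp [hF, hB, hwc, hsum]
      · have hps : φ j (∑ i, w i • p i) = ∑ i, φ j (p i) * w i := by
          rw [map_sum]; exact Finset.sum_congr rfl fun i _ => by simp [smul_eq_mul, mul_comm]
        rcases b with _ | _ <;>
          simp only [hF, hB, Sum.elim_inr, Bool.false_eq_true, if_true, if_false,
            LinearMap.sub_apply, LinearMap.coe_comp, Function.comp_apply, LinearMap.snd_apply,
            LinearMap.sum_apply, LinearMap.smul_apply, smul_eq_mul, hwc, hps] <;> simp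
  have hEq : {v | ∃ w, (w, v) ∈ {x : (Fin m → ℝ) × ((Fin n → ℝ) × (Fin n → ℝ)) | ∀ q, F q x ≤ B q}} = convexHull ℝ (Set.range p) := by
    apply Set.Subset.antisymm
    · rintro v ⟨w, hw⟩
      obtain ⟨h0, hsum, rfl⟩ := (hmem w v).mp hw
      exact (convex_convexHull ℝ _).sum_mem (fun i _ => h0 i) hsum
        (fun i _ => subset_convexHull ℝ _ (Set.mem_range_self i))
    · apply convexHull_min
      · rintro _ ⟨i, rfl⟩
        refine ⟨Pi.single i 1, (hmem _ _).mpr ⟨?_, ?_, ?_⟩⟩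
        · intro j; by_cases h : j = i <;> simp [h, Pi.single_apply]
        · simp
        · rw [Finset.sum_eq_single i (fun j _ hj => by simp [Pi.single_apply, hj]) (by simp)]
          simp
      · intro x hx y hy a b ha hb hab
        obtain ⟨wx, hwx⟩ := hx
        obtain ⟨wy, hwy⟩ := hy
        obtain ⟨hx0, hxs, rfl⟩ := (hmem _ _).mp hwx
        obtain ⟨hy0, hys, rfl⟩ := (hmem _ _).mp hwy
        refine ⟨fun i => a * wx i + b * wy i, (hmem _ _).mpr ⟨?_, ?_, ?_⟩⟩
        · intro i; exact add_nonneg (mul_nonneg ha (hx0 i)) (mul_nonneg hb (hy0 i))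
        · rw [Finset.sum_add_distrib, ← Finset.mul_sum, ← Finset.mul_sum, hxs, hys]
          simpa using hab
        · rw [Finset.smul_sum, Finset.smul_sum, ← Finset.sum_add_distrib]
          congr 1
          funext i
          rw [add_smul, smul_smul, smul_smul]
  rw [← hEq]
  exact hproj

end Hull




/-- A cycle of length `m` for a relation `S ⊆ ℝ^n × ℝ^n`: a sequence of integer
vectors with consecutive pairs (cyclically) in `S`. -/
def HasCycleOfLength (n : ℕ) (S : Set ((Fin n → ℝ) × (Fin n → ℝ))) (m : ℕ) [NeZero m] : Prop :=
  ∃ s : Fin m → (Fin n → ℤ),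
    ∀ i : Fin m, ((fun j => ((s i j : ℝ))), (fun j => ((s (i + 1) j : ℝ)))) ∈ S

/-- A polyhedral relation: a finite intersection of closed half-spaces. -/
def IsPolyhedralRelation (n : ℕ) (P : Set ((Fin n → ℝ) × (Fin n → ℝ))) : Prop :=
  ∃ (k : ℕ) (f : Fin k → ((Fin n → ℝ) × (Fin n → ℝ)) →ₗ[ℝ] ℝ) (b : Fin k → ℝ),
    P = {x | ∀ i, f i x ≤ b i}

theorem stmt_4 (n : ℕ) (M : ℕ → ℕ)
    (hpoly : ∀ R : Set ((Fin n → ℝ) × (Fin n → ℝ)), IsPolyhedralRelation n R →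
      (∃ m, ∃ _ : NeZero m, HasCycleOfLength n R m) → ∃ m, m ≤ M n ∧ ∃ _ : NeZero m, HasCycleOfLength n R m)
    (T : Set ((Fin n → ℝ) × (Fin n → ℝ))) (hT : Convex ℝ T)
    (hcyc : ∃ m, ∃ _ : NeZero m, HasCycleOfLength n T m) :
    ∃ m, m ≤ M n ∧ ∃ _ : NeZero m, HasCycleOfLength n T m := by
  obtain ⟨m, hm, s, hs⟩ := hcyc
  set p : Fin m → (Fin n → ℝ) × (Fin n → ℝ) :=
    fun i => ((fun j => ((s i j : ℝ))), (fun j => ((s (i + 1) j : ℝ)))) with hp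
  set R := convexHull ℝ (Set.range p) with hR
  have hRpoly : IsPolyhedralRelation n R := polyIn_convexHull p
  have hRT : R ⊆ T := convexHull_min (by rintro _ ⟨i, rfl⟩; exact hs i) hT
  have hRcyc : ∃ m, ∃ _ : NeZero m, HasCycleOfLength n R m :=
    ⟨m, hm, s, fun i => subset_convexHull ℝ _ (Set.mem_range_self i)⟩
  obtain ⟨m', hle, hm', s', hs'⟩ := hpoly R hRpoly hRcyc
  exact ⟨m', hle, hm', s', fun i => hRT (hs' i)⟩
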